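/- If A = M − N is a regular splitting with A^{-1} ≥ 0 entrywise, then ρ(M^{-1}N) = ρ(A^{-1}N)/(1 + ρ(A^{-1}N)) < 1. -/

import Mathlib

open Matrix

/-- The spectral radius of a real matrix: the supremum of the moduli of its
complex eigenvalues (elements of the spectrum of the complexified matrix). -/
noncomputable def specRad {m : Type*} [Fintype m] [DecidableEq m]
    (A : Matrix m m ℝ) : ℝ :=
  sSup {x : ℝ | ∃ μ : ℂ, μ ∈ spectrum ℂ (A.map (algebraMap ℝ ℂ)) ∧ x = ‖μ‖}

namespace Stmt17
open Filter Topology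
open scoped NNReal

attribute [local instance] Matrix.linftyOpNormedAddCommGroup Matrix.linftyOpNormedRing
  Matrix.linftyOpNormedAlgebra Matrix.linftyOpNormedSpace

variable {n : ℕ}

/-- complexification -/
noncomputable def cm (B : Matrix (Fin n) (Fin n) ℝ) : Matrix (Fin n) (Fin n) ℂ :=
  B.map (algebraMap ℝ ℂ)

lemma cm_def (B : Matrix (Fin n) (Fin n) ℝ) : cm B = (algebraMap ℝ ℂ).mapMatrix B := rfl

lemma cm_mul (B C : Matrix (Fin n) (Fin n) ℝ) : cm (B * C) = cm B * cm C := by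
  simp [cm_def, _root_.map_mul]

lemma cm_one : cm (1 : Matrix (Fin n) (Fin n) ℝ) = 1 := by simp [cm_def]

lemma cm_add (B C : Matrix (Fin n) (Fin n) ℝ) : cm (B + C) = cm B + cm C := by
  simp [cm_def, _root_.map_add]

lemma cm_sub (B C : Matrix (Fin n) (Fin n) ℝ) : cm (B - C) = cm B - cm C := by
  simp [cm_def, _root_.map_sub]

lemma cm_pow (B : Matrix (Fin n) (Fin n) ℝ) (k : ℕ) : cm (B ^ k) = cm B ^ k := by
  simp [cm_def, _root_.map_pow]

lemma cm_apply (B : Matrix (Fin n) (Fin n) ℝ) (i j : Fin n) :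
    cm B i j = ((B i j : ℝ) : ℂ) := rfl

instance : CompleteSpace (Matrix (Fin n) (Fin n) ℂ) := FiniteDimensional.complete ℂ _

lemma specRad_eq (B : Matrix (Fin n) (Fin n) ℝ) :
    specRad B = sSup (norm '' spectrum ℂ (cm B)) := by
  unfold specRad
  congr 1
  ext x
  constructor
  · rintro ⟨μ, hμ, rfl⟩; exact ⟨μ, hμ, rfl⟩
  · rintro ⟨μ, hμ, rfl⟩; exact ⟨μ, hμ, rfl⟩

lemma bddAbove_norm_spec (B : Matrix (Fin n) (Fin n) ℝ) :
    BddAbove (norm '' spectrum ℂ (cm B)) :=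
  ((spectrum.isCompact (cm B)).image continuous_norm).bddAbove

lemma norm_le_specRad {B : Matrix (Fin n) (Fin n) ℝ} {μ : ℂ}
    (hμ : μ ∈ spectrum ℂ (cm B)) : ‖μ‖ ≤ specRad B := by
  rw [specRad_eq]
  exact le_csSup (bddAbove_norm_spec B) ⟨μ, hμ, rfl⟩

lemma exists_norm_eq_specRad (hn : 0 < n) (B : Matrix (Fin n) (Fin n) ℝ) :
    ∃ μ ∈ spectrum ℂ (cm B), ‖μ‖ = specRad B := by
  haveI : Nonempty (Fin n) := ⟨⟨0, hn⟩⟩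
  haveI : Nontrivial (Matrix (Fin n) (Fin n) ℂ) := Matrix.nonempty
  have hne : (spectrum ℂ (cm B)).Nonempty := spectrum.nonempty (cm B)
  have hcpt : IsCompact (norm '' spectrum ℂ (cm B)) :=
    (spectrum.isCompact (cm B)).image continuous_norm
  have hmem := hcpt.sSup_mem (hne.image _)
  rw [← specRad_eq] at hmem
  obtain ⟨μ, hμ, h⟩ := hmem
  exact ⟨μ, hμ, h⟩

lemma specRad_nonneg (B : Matrix (Fin n) (Fin n) ℝ) : 0 ≤ specRad B := by
  rw [specRad_eq]
  rcases (spectrum ℂ (cm B)).eq_empty_or_nonempty with h | h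
  · simp [h, Real.sSup_empty]
  · obtain ⟨μ, hμ⟩ := h
    exact le_trans (norm_nonneg μ) (le_csSup (bddAbove_norm_spec B) ⟨μ, hμ, rfl⟩)

lemma specRad_le_of_forall (B : Matrix (Fin n) (Fin n) ℝ) {c : ℝ} (hc : 0 ≤ c)
    (h : ∀ μ ∈ spectrum ℂ (cm B), ‖μ‖ ≤ c) : specRad B ≤ c := by
  rw [specRad_eq]
  apply Real.sSup_le _ hc
  rintro x ⟨μ, hμ, rfl⟩
  exact h μ hμ

variable {n : ℕ}

lemma entry_nnnorm_le (X : Matrix (Fin n) (Fin n) ℂ) (i j : Fin n) : ‖X i j‖₊ ≤ ‖X‖₊ := by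
  rw [Matrix.linfty_opNNNorm_def]
  calc ‖X i j‖₊ ≤ ∑ j' : Fin n, ‖X i j'‖₊ :=
        Finset.single_le_sum (f := fun j' => ‖X i j'‖₊) (fun _ _ => zero_le) (Finset.mem_univ j)
    _ ≤ _ := Finset.le_sup (f := fun i => ∑ j, ‖X i j‖₊) (Finset.mem_univ i)

lemma entry_norm_le (X : Matrix (Fin n) (Fin n) ℂ) (i j : Fin n) : ‖X i j‖ ≤ ‖X‖ :=
  entry_nnnorm_le X i j

lemma norm_le_norm_of_entry_le {X Z : Matrix (Fin n) (Fin n) ℂ}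
    (h : ∀ i j, ‖X i j‖ ≤ ‖Z i j‖) : ‖X‖ ≤ ‖Z‖ := by
  have h' : ∀ i j, ‖X i j‖₊ ≤ ‖Z i j‖₊ := fun i j => h i j
  rw [← coe_nnnorm, ← coe_nnnorm, NNReal.coe_le_coe, Matrix.linfty_opNNNorm_def,
    Matrix.linfty_opNNNorm_def]
  exact Finset.sup_mono_fun fun i _ => Finset.sum_le_sum fun j _ => h' i j

lemma norm_le_sum_sum (X : Matrix (Fin n) (Fin n) ℂ) :
    ‖X‖ ≤ ∑ i : Fin n, ∑ j : Fin n, ‖X i j‖ := by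
  rw [← coe_nnnorm, Matrix.linfty_opNNNorm_def]
  have : ((Finset.univ : Finset (Fin n)).sup fun i => ∑ j, ‖X i j‖₊)
      ≤ ∑ i : Fin n, ∑ j : Fin n, ‖X i j‖₊ :=
    Finset.sup_le fun i _ => Finset.single_le_sum
      (f := fun i => ∑ j, ‖X i j‖₊) (fun _ _ => zero_le) (Finset.mem_univ i)
  calc ((_ : ℝ≥0) : ℝ) ≤ ((∑ i : Fin n, ∑ j : Fin n, ‖X i j‖₊ : ℝ≥0) : ℝ) := this
    _ = _ := by push_cast; rfl

section entryHom
variable (𝕜 : Type*) [NormedField 𝕜]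

/-- entry evaluation as an additive monoid hom -/
def entryHom (i j : Fin n) : Matrix (Fin n) (Fin n) 𝕜 →+ 𝕜 where
  toFun X := X i j
  map_zero' := rfl
  map_add' _ _ := rfl

lemma entryHom_cont (i j : Fin n) : Continuous (entryHom 𝕜 i j) := by
  apply AddMonoidHomClass.continuous_of_bound (entryHom 𝕜 i j) 1
  intro X
  rw [one_mul]
  calc ‖X i j‖ ≤ ∑ j' : Fin n, ‖X i j'‖ :=
        Finset.single_le_sum (f := fun j' => ‖X i j'‖) (fun _ _ => norm_nonneg _)
          (Finset.mem_univ j)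
    _ ≤ _ := by
        rw [Matrix.linfty_opNorm_def]
        have : (∑ j' : Fin n, ‖X i j'‖₊ : ℝ≥0) ≤
            (Finset.univ : Finset (Fin n)).sup fun i => ∑ j, ‖X i j‖₊ :=
          Finset.le_sup (f := fun i => ∑ j, ‖X i j‖₊) (Finset.mem_univ i)
        calc (∑ j' : Fin n, ‖X i j'‖) = ((∑ j' : Fin n, ‖X i j'‖₊ : ℝ≥0) : ℝ) := by
              push_cast; rfl
          _ ≤ _ := this

lemma hasSum_entry {f : ℕ → Matrix (Fin n) (Fin n) 𝕜} {S : Matrix (Fin n) (Fin n) 𝕜}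
    (h : HasSum f S) (i j : Fin n) : HasSum (fun k => f k i j) (S i j) :=
  h.map (entryHom 𝕜 i j) (entryHom_cont 𝕜 i j)

end entryHom

lemma one_sub_mul_geom {R : Type*} [Ring R] (x : R) (m : ℕ) :
    (1 - x) * (∑ k ∈ Finset.range m, x ^ k) = 1 - x ^ m := by
  induction m with
  | zero => simp
  | succ m ih =>
      rw [Finset.sum_range_succ, mul_add, ih, sub_mul, one_mul, ← pow_succ']
      abel

lemma geom_mul_one_sub {R : Type*} [Ring R] (x : R) (m : ℕ) :
    (∑ k ∈ Finset.range m, x ^ k) * (1 - x) = 1 - x ^ m := by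
  induction m with
  | zero => simp
  | succ m ih =>
      rw [Finset.sum_range_succ, add_mul, ih, mul_sub, mul_one, ← pow_succ]
      abel

lemma neumann {𝕜 : Type*} [NontriviallyNormedField 𝕜] [CompleteSpace 𝕜]
    (X : Matrix (Fin n) (Fin n) 𝕜) (C q : ℝ) (hq0 : 0 ≤ q) (hq : q < 1)
    (hX : ∀ k, ‖X ^ k‖ ≤ C * q ^ k) :
    ∃ Y, HasSum (fun k => X ^ k) Y ∧ (1 - X) * Y = 1 ∧ Y * (1 - X) = 1 := by
  haveI : CompleteSpace (Matrix (Fin n) (Fin n) 𝕜) := FiniteDimensional.complete 𝕜 _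
  have hgeo : Summable fun k : ℕ => C * q ^ k :=
    (summable_geometric_of_lt_one hq0 hq).mul_left C
  have hsum : Summable fun k : ℕ => X ^ k :=
    @Summable.of_norm_bounded _ _ _ (FiniteDimensional.complete 𝕜 _) _ _ hgeo hX
  refine ⟨∑' k, X ^ k, hsum.hasSum, ?_, ?_⟩
  · have h1 : Tendsto (fun m => ∑ k ∈ Finset.range m, X ^ k) atTop (𝓝 (∑' k, X ^ k)) :=
      hsum.hasSum.tendsto_sum_nat
    have h0 : Tendsto (fun m : ℕ => X ^ m) atTop (𝓝 0) := by
      apply squeeze_zero_norm hX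
      simpa using (tendsto_pow_atTop_nhds_zero_of_lt_one hq0 hq).const_mul C
    have h2 : Tendsto (fun m => (1 - X) * ∑ k ∈ Finset.range m, X ^ k) atTop
        (𝓝 ((1 - X) * ∑' k, X ^ k)) := h1.const_mul _
    have h3 : Tendsto (fun m => (1 - X) * ∑ k ∈ Finset.range m, X ^ k) atTop (𝓝 1) := by
      simp only [one_sub_mul_geom]
      simpa using (tendsto_const_nhds (x := (1 : Matrix (Fin n) (Fin n) 𝕜))).sub h0
    exact tendsto_nhds_unique h2 h3
  · have h1 : Tendsto (fun m => ∑ k ∈ Finset.range m, X ^ k) atTop (𝓝 (∑' k, X ^ k)) :=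
      hsum.hasSum.tendsto_sum_nat
    have h0 : Tendsto (fun m : ℕ => X ^ m) atTop (𝓝 0) := by
      apply squeeze_zero_norm hX
      simpa using (tendsto_pow_atTop_nhds_zero_of_lt_one hq0 hq).const_mul C
    have h2 : Tendsto (fun m => (∑ k ∈ Finset.range m, X ^ k) * (1 - X)) atTop
        (𝓝 ((∑' k, X ^ k) * (1 - X))) := h1.mul_const _
    have h3 : Tendsto (fun m => (∑ k ∈ Finset.range m, X ^ k) * (1 - X)) atTop (𝓝 1) := by
      simp only [geom_mul_one_sub]
      simpa using (tendsto_const_nhds (x := (1 : Matrix (Fin n) (Fin n) 𝕜))).sub h0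
    exact tendsto_nhds_unique h2 h3

lemma entry_pow_nonneg {B : Matrix (Fin n) (Fin n) ℝ} (hB : ∀ i j, 0 ≤ B i j) :
    ∀ k i j, 0 ≤ (B ^ k) i j := by
  intro k
  induction k with
  | zero =>
      intro i j
      rw [pow_zero]
      by_cases h : i = j <;> simp [Matrix.one_apply, h]
  | succ k ih =>
      intro i j
      rw [pow_succ, Matrix.mul_apply]
      exact Finset.sum_nonneg fun l _ => mul_nonneg (ih i l) (hB l j)

lemma entry_mul_nonneg {B C : Matrix (Fin n) (Fin n) ℝ}
    (hB : ∀ i j, 0 ≤ B i j) (hC : ∀ i j, 0 ≤ C i j) : ∀ i j, 0 ≤ (B * C) i j := by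
  intro i j
  rw [Matrix.mul_apply]
  exact Finset.sum_nonneg fun l _ => mul_nonneg (hB i l) (hC l j)

/-- Gelfand-type geometric bound from the spectral radius. -/
lemma pow_norm_bound (B : Matrix (Fin n) (Fin n) ℝ) {q : ℝ} (hq : specRad B < q) :
    ∃ C : ℝ, 1 ≤ C ∧ ∀ k, ‖cm B ^ k‖ ≤ C * q ^ k := by
  have hq0 : 0 < q := lt_of_le_of_lt (specRad_nonneg B) hq
  have hsr : spectralRadius ℂ (cm B) ≤ ENNReal.ofReal (specRad B) := by
    apply iSup₂_le
    intro μ hμ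
    rw [← ENNReal.ofReal_coe_nnreal, coe_nnnorm]
    exact ENNReal.ofReal_le_ofReal (norm_le_specRad hμ)
  have hlt : spectralRadius ℂ (cm B) < ENNReal.ofReal q :=
    lt_of_le_of_lt hsr ((ENNReal.ofReal_lt_ofReal_iff hq0).mpr hq)
  have hgel := spectrum.pow_nnnorm_pow_one_div_tendsto_nhds_spectralRadius (cm B)
  have hev : ∀ᶠ k : ℕ in atTop, ((‖cm B ^ k‖₊ : ENNReal) ^ (1 / (k:ℝ))) < ENNReal.ofReal q :=
    hgel.eventually_lt_const hlt
  obtain ⟨K, hK⟩ := hev.exists_forall_of_atTop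
  set K' := max K 1 with hK'
  have key : ∀ k, K' ≤ k → ‖cm B ^ k‖ ≤ q ^ k := by
    intro k hk
    have hk1 : 1 ≤ k := le_trans (le_max_right K 1) hk
    have h := hK k (le_trans (le_max_left K 1) hk)
    have hkne : (k : ℝ) ≠ 0 := by positivity
    have h2 : ((‖cm B ^ k‖₊ : ENNReal) ^ (1 / (k:ℝ))) ^ (k : ℕ) ≤ (ENNReal.ofReal q) ^ (k:ℕ) :=
      pow_le_pow_left' h.le k
    rw [← ENNReal.rpow_natCast (((‖cm B ^ k‖₊ : ENNReal) ^ (1 / (k:ℝ)))) k,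
      ← ENNReal.rpow_mul, one_div, inv_mul_cancel₀ hkne, ENNReal.rpow_one] at h2
    rw [← ENNReal.ofReal_pow hq0.le] at h2
    rw [← ENNReal.ofReal_coe_nnreal, coe_nnnorm] at h2
    exact (ENNReal.ofReal_le_ofReal_iff (by positivity)).mp h2
  have hsumnn : (0:ℝ) ≤ ∑ k ∈ Finset.range K', ‖cm B ^ k‖ / q ^ k :=
    Finset.sum_nonneg fun _ _ => by positivity
  refine ⟨1 + ∑ k ∈ Finset.range K', ‖cm B ^ k‖ / q ^ k, by linarith, ?_⟩
  intro k
  rcases lt_or_ge k K' with h | h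
  · have hterm : ‖cm B ^ k‖ / q ^ k ≤ 1 + ∑ k ∈ Finset.range K', ‖cm B ^ k‖ / q ^ k := by
      have h1 : ‖cm B ^ k‖ / q ^ k ≤ ∑ k ∈ Finset.range K', ‖cm B ^ k‖ / q ^ k :=
        Finset.single_le_sum (f := fun k => ‖cm B ^ k‖ / q ^ k)
          (fun _ _ => by positivity) (Finset.mem_range.mpr h)
      linarith
    calc ‖cm B ^ k‖ = (‖cm B ^ k‖ / q ^ k) * q ^ k := by field_simp
      _ ≤ _ := mul_le_mul_of_nonneg_right hterm (by positivity)
  · calc ‖cm B ^ k‖ ≤ q ^ k := key k h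
      _ = 1 * q ^ k := (one_mul _).symm
      _ ≤ _ := by
          apply mul_le_mul_of_nonneg_right _ (by positivity)
          have : (0:ℝ) ≤ ∑ k ∈ Finset.range K', ‖cm B ^ k‖ / q ^ k :=
            Finset.sum_nonneg fun _ _ => by positivity
          linarith


lemma resolvent_bound (B : Matrix (Fin n) (Fin n) ℝ) (hB : ∀ i j, 0 ≤ B i j)
    (C q : ℝ) (hq0 : 0 ≤ q) (hXb : ∀ k, ‖cm B ^ k‖ ≤ C * q ^ k)
    (lam : ℂ) (hlam : q < ‖lam‖) :
    ∃ u ut : (Matrix (Fin n) (Fin n) ℂ)ˣ,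
      (u : Matrix (Fin n) (Fin n) ℂ) = lam • 1 - cm B ∧
      (ut : Matrix (Fin n) (Fin n) ℂ) = ((‖lam‖ : ℂ)) • 1 - cm B ∧
      ‖((u⁻¹ : (Matrix (Fin n) (Fin n) ℂ)ˣ) : Matrix (Fin n) (Fin n) ℂ)‖ ≤
        ‖((ut⁻¹ : (Matrix (Fin n) (Fin n) ℂ)ˣ) : Matrix (Fin n) (Fin n) ℂ)‖ := by
  set t : ℝ := ‖lam‖ with ht
  have ht0 : 0 < t := lt_of_le_of_lt hq0 hlam
  have hlam0 : lam ≠ 0 := norm_pos_iff.mp ht0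
  have htC0 : (t : ℂ) ≠ 0 := by exact_mod_cast ne_of_gt ht0
  set X := lam⁻¹ • cm B with hX
  set Xt := ((t:ℝ):ℂ)⁻¹ • cm B with hXt
  have hq1 : q / t < 1 := (div_lt_one ht0).mpr hlam
  have hq1' : 0 ≤ q / t := div_nonneg hq0 ht0.le
  have hXpow : ∀ k, X ^ k = (lam⁻¹) ^ k • cm (B ^ k) := by
    intro k; rw [hX, smul_pow, cm_pow]
  have hXtpow : ∀ k, Xt ^ k = (((t:ℝ):ℂ)⁻¹) ^ k • cm (B ^ k) := by
    intro k; rw [hXt, smul_pow, cm_pow]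
  have hnX : ∀ k, ‖X ^ k‖ ≤ C * (q / t) ^ k := by
    intro k
    rw [hXpow k, norm_smul, norm_pow, norm_inv, ← ht, cm_pow]
    calc t⁻¹ ^ k * ‖cm B ^ k‖ ≤ t⁻¹ ^ k * (C * q ^ k) :=
          mul_le_mul_of_nonneg_left (hXb k) (by positivity)
      _ = C * (q / t) ^ k := by rw [div_pow]; ring
  have hnXt : ∀ k, ‖Xt ^ k‖ ≤ C * (q / t) ^ k := by
    intro k
    have htn : ‖((t:ℝ):ℂ)‖ = t := by simp [abs_of_nonneg ht0.le]
    rw [hXtpow k, norm_smul, norm_pow, norm_inv, htn, cm_pow]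
    calc t⁻¹ ^ k * ‖cm B ^ k‖ ≤ t⁻¹ ^ k * (C * q ^ k) :=
          mul_le_mul_of_nonneg_left (hXb k) (by positivity)
      _ = C * (q / t) ^ k := by rw [div_pow]; ring
  obtain ⟨Y, hY, hYl, hYr⟩ := neumann X C (q/t) hq1' hq1 hnX
  obtain ⟨Yt, hYt, hYtl, hYtr⟩ := neumann Xt C (q/t) hq1' hq1 hnXt
  have hfact : lam • ((1 : Matrix (Fin n) (Fin n) ℂ) - X) = lam • 1 - cm B := by
    rw [smul_sub, hX, smul_smul, mul_inv_cancel₀ hlam0, one_smul]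
  have hfactt : ((t:ℝ):ℂ) • ((1 : Matrix (Fin n) (Fin n) ℂ) - Xt) = ((t:ℝ):ℂ) • 1 - cm B := by
    rw [smul_sub, hXt, smul_smul, mul_inv_cancel₀ htC0, one_smul]
  have pf1 : (lam • 1 - cm B) * (lam⁻¹ • Y) = 1 := by
    rw [← hfact, smul_mul_assoc, mul_smul_comm, smul_smul, mul_inv_cancel₀ hlam0, one_smul, hYl]
  have pf2 : (lam⁻¹ • Y) * (lam • 1 - cm B) = 1 := by
    rw [← hfact, smul_mul_assoc, mul_smul_comm, smul_smul, inv_mul_cancel₀ hlam0, one_smul, hYr]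
  have pf1t : (((t:ℝ):ℂ) • 1 - cm B) * (((t:ℝ):ℂ)⁻¹ • Yt) = 1 := by
    rw [← hfactt, smul_mul_assoc, mul_smul_comm, smul_smul, mul_inv_cancel₀ htC0, one_smul, hYtl]
  have pf2t : (((t:ℝ):ℂ)⁻¹ • Yt) * (((t:ℝ):ℂ) • 1 - cm B) = 1 := by
    rw [← hfactt, smul_mul_assoc, mul_smul_comm, smul_smul, inv_mul_cancel₀ htC0, one_smul, hYtr]
  refine ⟨⟨lam • 1 - cm B, lam⁻¹ • Y, pf1, pf2⟩,
          ⟨((t:ℝ):ℂ) • 1 - cm B, ((t:ℝ):ℂ)⁻¹ • Yt, pf1t, pf2t⟩, rfl, rfl, ?_⟩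
  show ‖lam⁻¹ • Y‖ ≤ ‖((t:ℝ):ℂ)⁻¹ • Yt‖
  apply norm_le_norm_of_entry_le
  intro i j
  have hYe : HasSum (fun k => (X ^ k) i j) (Y i j) := hasSum_entry ℂ hY i j
  have hYte : HasSum (fun k => (Xt ^ k) i j) (Yt i j) := hasSum_entry ℂ hYt i j
  -- the comparison scalar series
  set g : ℕ → ℝ := fun k => (t⁻¹) ^ k * (B ^ k) i j with hg
  have hXe : ∀ k, (X ^ k) i j = (lam⁻¹) ^ k * (((B ^ k) i j : ℝ) : ℂ) := by
    intro k; rw [hXpow k, Matrix.smul_apply, smul_eq_mul, cm_apply]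
  have hXte : ∀ k, (Xt ^ k) i j = (((g k : ℝ)) : ℂ) := by
    intro k
    rw [hXtpow k, Matrix.smul_apply, smul_eq_mul, cm_apply, hg]
    push_cast
    ring
  have hnorme : ∀ k, ‖(X ^ k) i j‖ = g k := by
    intro k
    rw [hXe k, norm_mul, norm_pow, norm_inv, ← ht, hg]
    simp [Real.norm_eq_abs, abs_of_nonneg (entry_pow_nonneg hB k i j)]
  have hgsum : HasSum g ((Yt i j).re) := by
    have := Complex.reCLM.hasSum hYte
    convert this using 2 with k
    rw [hXte k]
    simp
    rfl
  have h1 : ‖Y i j‖ ≤ ∑' k, ‖(X ^ k) i j‖ := by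
    rw [← hYe.tsum_eq]
    apply norm_tsum_le_tsum_norm
    have : (fun k => ‖(X ^ k) i j‖) = g := funext hnorme
    rw [this]
    exact hgsum.summable
  have h2 : (∑' k, ‖(X ^ k) i j‖) = (Yt i j).re := by
    have : (fun k => ‖(X ^ k) i j‖) = g := funext hnorme
    rw [this, hgsum.tsum_eq]
  have h3 : (Yt i j).re ≤ ‖Yt i j‖ := Complex.re_le_norm (Yt i j)
  have key : ‖Y i j‖ ≤ ‖Yt i j‖ := by linarith [h1, h2.le, h3]
  rw [Matrix.smul_apply, Matrix.smul_apply, smul_eq_mul, smul_eq_mul, norm_mul, norm_mul,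
    norm_inv, norm_inv]
  have : ‖((t:ℝ):ℂ)‖ = ‖lam‖ := by simp [← ht, abs_of_nonneg ht0.le]
  rw [this]
  exact mul_le_mul_of_nonneg_left key (by positivity)


lemma specRad_mem_spectrum (hn : 0 < n) (B : Matrix (Fin n) (Fin n) ℝ)
    (hB : ∀ i j, 0 ≤ B i j) :
    ((specRad B : ℝ) : ℂ) ∈ spectrum ℂ (cm B) := by
  haveI : Nonempty (Fin n) := ⟨⟨0, hn⟩⟩
  haveI : Nontrivial (Matrix (Fin n) (Fin n) ℂ) := Matrix.nonempty
  set r := specRad B with hr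
  have hr0 : 0 ≤ r := specRad_nonneg B
  obtain ⟨μ, hμ, hμr⟩ := exists_norm_eq_specRad hn B
  by_contra hmem
  rw [spectrum.mem_iff, not_not, Algebra.algebraMap_eq_smul_one] at hmem
  -- hmem : IsUnit (((r:ℝ):ℂ) • 1 - cm B)
  rcases eq_or_lt_of_le hr0 with h0 | hrpos
  · -- r = 0
    have hμ0 : μ = 0 := norm_eq_zero.mp (by rw [hμr]; exact h0.symm)
    apply spectrum.mem_iff.mp hμ
    rw [hμ0, map_zero, zero_sub]
    rw [← h0] at hmem
    simpa using hmem
  · -- r > 0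
    set F : ℂ → Matrix (Fin n) (Fin n) ℂ := fun z => z • 1 - cm B with hF
    have hu0 : IsUnit (F ((r:ℝ):ℂ)) := hmem
    have hRcont : ContinuousAt Ring.inverse (F ((r:ℝ):ℂ)) := by
      have h := NormedRing.inverse_continuousAt hu0.unit
      rwa [hu0.unit_spec] at h
    set ε : ℕ → ℝ := fun j => 1 / ((j:ℝ) + 1) with hε
    have hεpos : ∀ j, 0 < ε j := fun j => by positivity
    have hεt : Filter.Tendsto ε Filter.atTop (𝓝 0) := tendsto_one_div_add_atTop_nhds_zero_nat
    set t : ℕ → ℝ := fun j => (1 + ε j) * r with hteq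
    have htr : ∀ j, r < t j := by
      intro j
      have h := hεpos j
      show r < (1 + ε j) * r
      nlinarith
    set lam : ℕ → ℂ := fun j => ((1 + ε j : ℝ) : ℂ) * μ with hlam
    have hnormlam : ∀ j, ‖lam j‖ = t j := by
      intro j
      rw [hlam]
      simp only [norm_mul, Complex.norm_real, Real.norm_eq_abs, hμr]
      rw [abs_of_pos (by have := hεpos j; linarith), hteq]
    -- convergence of the real resolvent norms
    have htt : Filter.Tendsto (fun j => ((t j : ℝ) : ℂ)) Filter.atTop (𝓝 ((r:ℝ):ℂ)) := by
      apply Filter.Tendsto.comp (Complex.continuous_ofReal.tendsto r)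
      have : Filter.Tendsto t Filter.atTop (𝓝 ((1 + 0) * r)) :=
        ((tendsto_const_nhds.add hεt).mul_const r)
      simpa using this
    have hFc : Continuous F := by
      rw [hF]; exact (continuous_id.smul continuous_const).sub continuous_const
    have hFt : Filter.Tendsto (fun j => F ((t j : ℝ):ℂ)) Filter.atTop (𝓝 (F ((r:ℝ):ℂ))) :=
      (hFc.tendsto _).comp htt
    have hinvt : Filter.Tendsto (fun j => Ring.inverse (F ((t j:ℝ):ℂ))) Filter.atTop
        (𝓝 (Ring.inverse (F ((r:ℝ):ℂ)))) := hRcont.tendsto.comp hFt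
    set C0 : ℝ := ‖Ring.inverse (F ((r:ℝ):ℂ))‖ + 1 with hC0
    have hC0pos : 0 < C0 := by rw [hC0]; positivity
    have hev1 : ∀ᶠ j in Filter.atTop, ‖Ring.inverse (F ((t j:ℝ):ℂ))‖ < C0 := by
      apply (hinvt.norm).eventually_lt_const
      rw [hC0]; linarith
    have hev2 : ∀ᶠ j in Filter.atTop, ε j * r < C0⁻¹ := by
      have h : Filter.Tendsto (fun j => ε j * r) Filter.atTop (𝓝 0) := by
        simpa only [zero_mul] using hεt.mul_const r
      exact h.eventually_lt_const (by positivity)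
    obtain ⟨j, h1, h2⟩ := (hev1.and hev2).exists
    -- resolvent bound at level j
    set q : ℝ := (r + t j) / 2 with hq
    have hq1 : r < q := by rw [hq]; have := htr j; linarith
    have hq2 : q < t j := by rw [hq]; have := htr j; linarith
    have hq0 : 0 ≤ q := by have := htr j; rw [hq]; linarith
    obtain ⟨C, hC1, hCb⟩ := pow_norm_bound B hq1
    obtain ⟨u, ut, hu, hut, hle⟩ := resolvent_bound B hB C q hq0 hCb (lam j)
      (by rw [hnormlam j]; exact hq2)
    have hFut : F ((t j:ℝ):ℂ) = (ut : Matrix (Fin n) (Fin n) ℂ) := by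
      rw [hut, hnormlam j, hF]
    have hRinv : Ring.inverse (F ((t j:ℝ):ℂ)) = ((ut⁻¹ : (Matrix (Fin n) (Fin n) ℂ)ˣ) :
        Matrix (Fin n) (Fin n) ℂ) := by
      rw [hFut, Ring.inverse_unit]
    have hb : ‖((u⁻¹ : (Matrix (Fin n) (Fin n) ℂ)ˣ) : Matrix (Fin n) (Fin n) ℂ)‖ < C0 := by
      apply lt_of_le_of_lt hle
      rw [← hRinv]
      exact h1
    have hbpos : 0 < ‖((u⁻¹ : (Matrix (Fin n) (Fin n) ℂ)ˣ) : Matrix (Fin n) (Fin n) ℂ)‖ :=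
      Units.norm_pos u⁻¹
    have hdiff : F μ - (u : Matrix (Fin n) (Fin n) ℂ) = (μ - lam j) • 1 := by
      rw [hu, hF, sub_smul]
      exact sub_sub_sub_cancel_right _ _ _
    have hnd : ‖μ - lam j‖ = ε j * r := by
      have : μ - lam j = -(((ε j : ℝ):ℂ) * μ) := by rw [hlam]; push_cast; ring
      rw [this, norm_neg, norm_mul, Complex.norm_real, Real.norm_eq_abs,
        abs_of_pos (hεpos j), hμr]
    have hnear : ‖F μ - (u : Matrix (Fin n) (Fin n) ℂ)‖ <
        ‖((u⁻¹ : (Matrix (Fin n) (Fin n) ℂ)ˣ) : Matrix (Fin n) (Fin n) ℂ)‖⁻¹ := by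
      rw [hdiff, norm_smul, norm_one, mul_one, hnd]
      calc ε j * r < C0⁻¹ := h2
        _ ≤ _ := by
            apply inv_anti₀ hbpos hb.le
    have hunit : IsUnit (F μ) := (Units.ofNearby u (F μ) hnear).isUnit
    apply spectrum.mem_iff.mp hμ
    rw [Algebra.algebraMap_eq_smul_one]
    exact hunit


lemma smul_eq_algebraMap_mul (a : ℂ) (Z : Matrix (Fin n) (Fin n) ℂ) :
    a • Z = (algebraMap ℂ (Matrix (Fin n) (Fin n) ℂ) a) * Z := by
  rw [Algebra.algebraMap_eq_smul_one, smul_mul_assoc, one_mul]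

lemma spec_map_i {X Y : Matrix (Fin n) (Fin n) ℂ} (h1 : IsUnit ((1 : Matrix (Fin n) (Fin n) ℂ) - X))
    (hY : ((1 : Matrix (Fin n) (Fin n) ℂ) - X) * Y = X) {μ : ℂ} (hμ1 : μ ≠ 1)
    (hμ : μ ∈ spectrum ℂ X) : μ / (1 - μ) ∈ spectrum ℂ Y := by
  have hden : (1:ℂ) - μ ≠ 0 := sub_ne_zero.mpr (Ne.symm hμ1)
  rw [spectrum.mem_iff] at hμ ⊢
  intro hc
  apply hμ
  set c : ℂ := μ / (1 - μ) with hcdef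
  have hc' : (1 - μ) * c = μ := by rw [hcdef]; field_simp
  have key : algebraMap ℂ (Matrix (Fin n) (Fin n) ℂ) μ - X =
      (1 - μ) • (((1 : Matrix (Fin n) (Fin n) ℂ) - X) *
        (algebraMap ℂ (Matrix (Fin n) (Fin n) ℂ) c - Y)) := by
    rw [Algebra.algebraMap_eq_smul_one, Algebra.algebraMap_eq_smul_one,
      mul_sub, mul_smul_comm, mul_one, hY, smul_sub, smul_smul, hc',
      smul_sub, sub_smul, one_smul]
    abel
  rw [key]
  rw [smul_eq_algebraMap_mul]
  exact ((isUnit_iff_ne_zero.mpr hden).map (algebraMap ℂ (Matrix (Fin n) (Fin n) ℂ))).mul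
    (h1.mul hc)

lemma spec_map_ii {X Y : Matrix (Fin n) (Fin n) ℂ}
    (h1Y : IsUnit ((1 : Matrix (Fin n) (Fin n) ℂ) + Y))
    (hX : ((1 : Matrix (Fin n) (Fin n) ℂ) + Y) * X = Y) {lam : ℂ} (hl1 : lam ≠ -1)
    (hl : lam ∈ spectrum ℂ Y) : lam / (1 + lam) ∈ spectrum ℂ X := by
  have hden : (1:ℂ) + lam ≠ 0 := by
    intro h; apply hl1; linear_combination h
  rw [spectrum.mem_iff] at hl ⊢
  intro hc
  apply hl
  set d : ℂ := lam / (1 + lam) with hddef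
  have hd' : (1 + lam) * d = lam := by rw [hddef]; field_simp
  have key : algebraMap ℂ (Matrix (Fin n) (Fin n) ℂ) lam - Y =
      (1 + lam) • (((1 : Matrix (Fin n) (Fin n) ℂ) + Y) *
        (algebraMap ℂ (Matrix (Fin n) (Fin n) ℂ) d - X)) := by
    rw [Algebra.algebraMap_eq_smul_one, Algebra.algebraMap_eq_smul_one,
      mul_sub, mul_smul_comm, mul_one, hX, smul_sub, smul_smul, hd',
      smul_add, add_smul, one_smul]
    abel
  rw [key]
  rw [smul_eq_algebraMap_mul]
  exact ((isUnit_iff_ne_zero.mpr hden).map (algebraMap ℂ (Matrix (Fin n) (Fin n) ℂ))).mul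
    (h1Y.mul hc)


lemma main (hn : 0 < n) (A M N : Matrix (Fin n) (Fin n) ℝ)
    (hMN : A = M - N) (hM : IsUnit M) (hMinv : ∀ i j, 0 ≤ M⁻¹ i j)
    (hN : ∀ i j, 0 ≤ N i j)
    (hA : IsUnit A) (hAinv : ∀ i j, 0 ≤ A⁻¹ i j) :
    specRad (M⁻¹ * N) = specRad (A⁻¹ * N) / (1 + specRad (A⁻¹ * N)) ∧
    specRad (M⁻¹ * N) < 1 := by
  haveI : Nonempty (Fin n) := ⟨⟨0, hn⟩⟩
  haveI : Nontrivial (Matrix (Fin n) (Fin n) ℂ) := Matrix.nonempty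
  set G := M⁻¹ * N with hGdef
  set T := A⁻¹ * N with hTdef
  have hAd : IsUnit A.det := (Matrix.isUnit_iff_isUnit_det A).mp hA
  have hMd : IsUnit M.det := (Matrix.isUnit_iff_isUnit_det M).mp hM
  have hMM : M * M⁻¹ = 1 := Matrix.mul_nonsing_inv M hMd
  have hMM' : M⁻¹ * M = 1 := Matrix.nonsing_inv_mul M hMd
  have hAA : A * A⁻¹ = 1 := Matrix.mul_nonsing_inv A hAd
  have hAA' : A⁻¹ * A = 1 := Matrix.nonsing_inv_mul A hAd
  have e1 : M⁻¹ * A = 1 - G := by rw [hMN, Matrix.mul_sub, hMM']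
  have hMeq : M = A + N := by rw [hMN, sub_add_cancel]
  have eP : A⁻¹ * M = 1 + T := by rw [hMeq, Matrix.mul_add, hAA']
  have e2 : (1 - G) * (1 + T) = 1 := by
    rw [← e1, ← eP, Matrix.mul_assoc, ← Matrix.mul_assoc A A⁻¹ M, hAA, Matrix.one_mul, hMM']
  have e3 : (1 + T) * (1 - G) = 1 := by
    rw [← e1, ← eP, Matrix.mul_assoc, ← Matrix.mul_assoc M M⁻¹ A, hMM, Matrix.one_mul, hAA']
  have e4 : (1 - G) * T = G := by
    rw [← e1, hTdef, ← Matrix.mul_assoc, Matrix.mul_assoc M⁻¹ A A⁻¹, hAA, Matrix.mul_one, hGdef]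
  have e5 : (1 + T) * G = T := by
    rw [← eP, hGdef, ← Matrix.mul_assoc, Matrix.mul_assoc A⁻¹ M M⁻¹, hMM, Matrix.mul_one, hTdef]
  have hG : ∀ i j, 0 ≤ G i j := entry_mul_nonneg hMinv hN
  have hT : ∀ i j, 0 ≤ T i j := entry_mul_nonneg hAinv hN
  have hP : ∀ i j, 0 ≤ ((1 : Matrix (Fin n) (Fin n) ℝ) + T) i j := by
    intro i j
    rw [Matrix.add_apply, Matrix.one_apply]
    have := hT i j
    split <;> linarith
  -- partial sums of powers of G are bounded
  have hSm : ∀ m, (∑ k ∈ Finset.range m, G ^ k) = (1 + T) - (1 + T) * G ^ m := by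
    intro m
    have h := one_sub_mul_geom G m
    have h2 := congrArg (fun Z => (1 + T) * Z) h
    rw [← Matrix.mul_assoc, e3, Matrix.one_mul] at h2
    rw [h2, Matrix.mul_sub, Matrix.mul_one]
  have hEntry : ∀ i j m, (∑ k ∈ Finset.range m, (G ^ k) i j) ≤ (1 + T) i j := by
    intro i j m
    have h := congrArg (fun Z : Matrix (Fin n) (Fin n) ℝ => Z i j) (hSm m)
    simp only [Matrix.sum_apply, Matrix.sub_apply] at h
    rw [h]
    have := entry_mul_nonneg hP (entry_pow_nonneg hG m) i j
    linarith
  have hSumm : ∀ i j, Summable (fun k => (G ^ k) i j) := fun i j =>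
    summable_of_sum_range_le (fun k => entry_pow_nonneg hG k i j) (hEntry i j)
  have hnormt : Filter.Tendsto (fun k => ‖cm (G ^ k)‖) Filter.atTop (𝓝 0) := by
    have hb : ∀ k, ‖cm (G ^ k)‖ ≤ ∑ i : Fin n, ∑ j : Fin n, (G ^ k) i j := by
      intro k
      refine le_trans (norm_le_sum_sum _) (le_of_eq ?_)
      apply Finset.sum_congr rfl
      intro i _
      apply Finset.sum_congr rfl
      intro j _
      rw [cm_apply, Complex.norm_real, Real.norm_eq_abs,
        abs_of_nonneg (entry_pow_nonneg hG k i j)]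
    have hsumt : Filter.Tendsto (fun k => ∑ i : Fin n, ∑ j : Fin n, (G ^ k) i j)
        Filter.atTop (𝓝 0) := by
      have : Filter.Tendsto (fun k => ∑ i : Fin n, ∑ j : Fin n, (G ^ k) i j)
          Filter.atTop (𝓝 (∑ i : Fin n, ∑ j : Fin n, (0:ℝ))) := by
        apply tendsto_finset_sum
        intro i _
        apply tendsto_finset_sum
        intro j _
        exact (hSumm i j).tendsto_atTop_zero
      simpa using this
    exact squeeze_zero (fun k => norm_nonneg _) hb hsumt
  -- every eigenvalue of G has modulus < 1
  have hval : ∀ μ ∈ spectrum ℂ (cm G), ‖μ‖ < 1 := by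
    intro μ hμ
    have hpowmem : ∀ k : ℕ, μ ^ k ∈ spectrum ℂ (cm G ^ k) := by
      intro k
      have h := spectrum.subset_polynomial_aeval (cm G) (Polynomial.X ^ k : Polynomial ℂ)
        (Set.mem_image_of_mem _ hμ)
      simpa using h
    have hbk : ∀ k, ‖μ‖ ^ k ≤ ‖cm (G ^ k)‖ := by
      intro k
      rw [← norm_pow, cm_pow]
      exact spectrum.norm_le_norm_of_mem (hpowmem k)
    have htendμ : Filter.Tendsto (fun k => ‖μ‖ ^ k) Filter.atTop (𝓝 0) :=
      squeeze_zero (fun k => by positivity) hbk hnormt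
    by_contra hge
    push_neg at hge
    have h10 : (1:ℝ) ≤ 0 := ge_of_tendsto htendμ
      (Filter.Eventually.of_forall fun k => one_le_pow₀ hge)
    linarith
  set r := specRad G with hrdef
  have hr0 : 0 ≤ r := specRad_nonneg G
  have hr1 : r < 1 := by
    obtain ⟨μ₀, hμ₀, hμr⟩ := exists_norm_eq_specRad hn G
    rw [hrdef, ← hμr]
    exact hval μ₀ hμ₀
  have h1mr : (0:ℝ) < 1 - r := by linarith
  set s := specRad T with hsdef
  have hs0 : 0 ≤ s := specRad_nonneg T
  -- complex relations
  have hcub : (1 : Matrix (Fin n) (Fin n) ℂ) - cm G = cm (1 - G) := by rw [cm_sub, cm_one]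
  have hcup : (1 : Matrix (Fin n) (Fin n) ℂ) + cm T = cm (1 + T) := by rw [cm_add, cm_one]
  have h1c : IsUnit ((1 : Matrix (Fin n) (Fin n) ℂ) - cm G) := by
    rw [hcub, cm_def]
    exact (Units.mk (1 - G) (1 + T) e2 e3).isUnit.map (algebraMap ℝ ℂ).mapMatrix
  have h1Yc : IsUnit ((1 : Matrix (Fin n) (Fin n) ℂ) + cm T) := by
    rw [hcup, cm_def]
    exact (Units.mk (1 + T) (1 - G) e3 e2).isUnit.map (algebraMap ℝ ℂ).mapMatrix
  have hYc : ((1 : Matrix (Fin n) (Fin n) ℂ) - cm G) * cm T = cm G := by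
    rw [hcub, ← cm_mul, e4]
  have hXc : ((1 : Matrix (Fin n) (Fin n) ℂ) + cm T) * cm G = cm T := by
    rw [hcup, ← cm_mul, e5]
  -- lower bound : r / (1-r) ≤ s
  have hge : r / (1 - r) ≤ s := by
    have hrr : ((r : ℝ) : ℂ) ∈ spectrum ℂ (cm G) := specRad_mem_spectrum hn G hG
    have hr1' : ((r : ℝ) : ℂ) ≠ 1 := by
      intro h
      have : r = 1 := by exact_mod_cast h
      linarith
    have hc := spec_map_i h1c hYc hr1' hrr
    have hnorm : ‖((r:ℝ):ℂ) / (1 - ((r:ℝ):ℂ))‖ = r / (1 - r) := by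
      rw [norm_div]
      have h1 : ‖((r:ℝ):ℂ)‖ = r := by simp [abs_of_nonneg hr0]
      have h2 : ‖(1 : ℂ) - ((r:ℝ):ℂ)‖ = 1 - r := by
        rw [show (1:ℂ) - ((r:ℝ):ℂ) = (((1 - r : ℝ)):ℂ) by push_cast; ring,
          Complex.norm_real, Real.norm_eq_abs, abs_of_pos h1mr]
      rw [h1, h2]
    calc r / (1 - r) = ‖((r:ℝ):ℂ) / (1 - ((r:ℝ):ℂ))‖ := hnorm.symm
      _ ≤ s := norm_le_specRad hc
  -- upper bound : s ≤ r / (1-r)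
  have hle : s ≤ r / (1 - r) := by
    apply specRad_le_of_forall T (div_nonneg hr0 h1mr.le)
    intro lam hlam
    have hl1 : lam ≠ -1 := by
      intro h
      apply spectrum.mem_iff.mp hlam
      rw [h, Algebra.algebraMap_eq_smul_one]
      have : ((-1 : ℂ)) • (1 : Matrix (Fin n) (Fin n) ℂ) - cm T =
          -((1 : Matrix (Fin n) (Fin n) ℂ) + cm T) := by
        rw [neg_smul, one_smul]; abel
      rw [this]
      exact h1Yc.neg
    have hd := spec_map_ii h1Yc hXc hl1 hlam
    have hdle : ‖lam / (1 + lam)‖ ≤ r := norm_le_specRad hd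
    have hden : (1:ℂ) + lam ≠ 0 := by
      intro h; apply hl1; linear_combination h
    set d : ℂ := lam / (1 + lam) with hddef
    have hd1 : ‖d‖ < 1 := lt_of_le_of_lt hdle hr1
    have hlameq : lam = d * (1 + lam) := by rw [hddef]; field_simp
    have h1d : (1:ℂ) - d = 1 / (1 + lam) := by rw [hddef]; field_simp; ring
    have h1dnorm : ‖(1:ℂ) - d‖ = 1 / ‖1 + lam‖ := by rw [h1d, norm_div, norm_one]
    have h1dlow : 1 - ‖d‖ ≤ ‖(1:ℂ) - d‖ := by
      have h := norm_sub_norm_le (1:ℂ) d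
      rwa [norm_one] at h
    have h1dpos : 0 < 1 - ‖d‖ := by linarith
    have hlamnorm : ‖lam‖ = ‖d‖ * ‖1 + lam‖ := by
      conv_lhs => rw [hlameq]
      rw [norm_mul]
    have hnlam : ‖(1:ℂ) + lam‖ ≤ 1 / (1 - ‖d‖) := by
      rw [show ‖(1:ℂ) + lam‖ = 1 / ‖(1:ℂ) - d‖ by rw [h1dnorm]; field_simp]
      exact one_div_le_one_div_of_le h1dpos h1dlow
    calc ‖lam‖ = ‖d‖ * ‖(1:ℂ) + lam‖ := hlamnorm
      _ ≤ ‖d‖ * (1 / (1 - ‖d‖)) := mul_le_mul_of_nonneg_left hnlam (norm_nonneg d)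
      _ = ‖d‖ / (1 - ‖d‖) := by ring
      _ ≤ r / (1 - r) := by
          rw [div_le_div_iff₀ h1dpos h1mr]
          nlinarith [hdle, norm_nonneg d]
  have hseq : s = r / (1 - r) := le_antisymm hle hge
  constructor
  · rw [hseq]
    have hne : (1:ℝ) - r ≠ 0 := ne_of_gt h1mr
    field_simp
    ring
  · exact hr1

end Stmt17

theorem stmt17 {n : ℕ} (A M N : Matrix (Fin n) (Fin n) ℝ)
    (hMN : A = M - N) (hM : IsUnit M) (hMinv : ∀ i j, 0 ≤ M⁻¹ i j)
    (hN : ∀ i j, 0 ≤ N i j)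
    (hA : IsUnit A) (hAinv : ∀ i j, 0 ≤ A⁻¹ i j) :
    specRad (M⁻¹ * N) = specRad (A⁻¹ * N) / (1 + specRad (A⁻¹ * N)) ∧
    specRad (M⁻¹ * N) < 1 := by
  rcases Nat.eq_zero_or_pos n with hn | hn
  · subst hn
    haveI : Subsingleton (Matrix (Fin 0) (Fin 0) ℂ) :=
      ⟨fun a b => by ext i j; exact i.elim0⟩
    have hz : ∀ X : Matrix (Fin 0) (Fin 0) ℝ, specRad X = 0 := by
      intro X
      have hspec : spectrum ℂ (X.map (algebraMap ℝ ℂ)) = ∅ := by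
        ext z
        simp only [Set.mem_empty_iff_false, iff_false]
        intro hz
        exact (spectrum.mem_iff.mp hz) (isUnit_of_subsingleton _)
      have : {x : ℝ | ∃ μ : ℂ, μ ∈ spectrum ℂ (X.map (algebraMap ℝ ℂ)) ∧ x = ‖μ‖} = ∅ := by
        ext x; simp [hspec]
      rw [specRad, this, Real.sSup_empty]
    rw [hz, hz]
    norm_num
  · exact Stmt17.main hn A M N hMN hM hMinv hN hA hAinv
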